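/- Let M be a positively ordered semigroup in which, whenever x + z ≤ y + z with z ∈ I(x) and z ∈ I(y), one has x ≤ y. Then M is nearly separative: 2x ≤ x + y ≤ 2y implies x ≤ y. -/

import Mathlib

def idealGen {M : Type*} [AddCommMonoid M] [PartialOrder M] (x : M) : Set M :=
  {z : M | ∃ n : ℕ, z ≤ n • x}

/-- `M` is preminimal: `x + v ≤ y + v` and `v ≤ w` imply `x + w ≤ y + w`. -/
def Preminimal (M : Type*) [AddCommMonoid M] [PartialOrder M] : Prop :=
  ∀ x y v w : M, x + v ≤ y + v → v ≤ w → x + w ≤ y + w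

/-- `M` is nearly separative: preminimal and `2x ≤ x + y ≤ 2y` implies `x ≤ y`. -/
def NearlySeparative (M : Type*) [AddCommMonoid M] [PartialOrder M] : Prop :=
  Preminimal M ∧ ∀ x y : M, 2 • x ≤ x + y → x + y ≤ 2 • y → x ≤ y

theorem stmt_3 {M : Type*} [AddCommMonoid M] [PartialOrder M]
    [CovariantClass M M (· + ·) (· ≤ ·)]
    (hpos : ∀ x : M, 0 ≤ x)
    (h : ∀ x y z : M, x + z ≤ y + z → z ∈ idealGen x → z ∈ idealGen y → x ≤ y) :
    NearlySeparative M := by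
  have hle : ∀ a b : M, a ≤ b + a := by
    intro a b
    calc a = a + 0 := (add_zero a).symm
    _ ≤ a + b := add_le_add_right (hpos b) a
    _ = b + a := add_comm a b
  constructor
  · intro x y v w hxy hvw
    refine h (x + w) (y + w) v ?_ ⟨1, ?_⟩ ⟨1, ?_⟩
    · calc (x + w) + v = (x + v) + w := by abel
      _ ≤ (y + v) + w := add_le_add_left hxy w
      _ = (y + w) + v := by abel
    · simpa using hvw.trans (hle w x)
    · simpa using hvw.trans (hle w y)
  · intro x y h1 h2
    refine h x y x ?_ ⟨1, by simp⟩ ⟨2, ?_⟩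
    · simpa [two_nsmul, add_comm] using h1
    · exact (hle x y).trans ((add_comm y x).symm ▸ h2)
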